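/- Let V ⊆ F_2^n be a binary linear code all of whose nonzero words have weight 24 or 32. Then dim V ≤ 9. -/

import Mathlib

open Finset

/-- Hamming weight of a word over `ZMod 2`. -/
def wt {ι : Type*} [Fintype ι] (v : ι → ZMod 2) : ℕ :=
  (Finset.univ.filter fun i => v i ≠ 0).card

/-- The dual code: annihilator under the standard scalar product. -/
def dualCode {n : ℕ} (V : Submodule (ZMod 2) (Fin n → ZMod 2)) :
    Submodule (ZMod 2) (Fin n → ZMod 2) where
  carrier := {w | ∀ v ∈ V, ∑ i, v i * w i = 0}
  add_mem' := by
    intro a b ha hb v hv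
    simp only [Pi.add_apply, mul_add, Finset.sum_add_distrib, ha v hv, hb v hv, add_zero]
  zero_mem' := by intro v hv; simp
  smul_mem' := by
    intro c a ha v hv
    have h := ha v hv
    calc ∑ i, v i * (c • a) i = c * ∑ i, v i * a i := by
          simp [Finset.mul_sum, mul_left_comm]
      _ = 0 := by rw [h, mul_zero]

/-- A code is spanning if the union of supports of its words is everything. -/
def Spanning {n : ℕ} (V : Submodule (ZMod 2) (Fin n → ZMod 2)) : Prop :=
  ∀ i : Fin n, ∃ v ∈ V, v i ≠ 0


section counting
variable {G H : Type*} [AddCommGroup G] [Fintype G] [AddCommGroup H] [Fintype H] [DecidableEq H]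

omit [Fintype H] in
lemma fiber_card_eq (f : G →+ H) (b c : H) (hb : ∃ a, f a = b) (hc : ∃ a, f a = c) :
    (univ.filter fun x => f x = b).card = (univ.filter fun x => f x = c).card := by
  obtain ⟨a, ha⟩ := hb
  obtain ⟨a', ha'⟩ := hc
  apply Finset.card_nbij' (fun x => x + (a' - a)) (fun x => x + (a - a'))
  · intro x hx
    simp only [coe_filter, mem_filter, mem_univ, true_and, Set.mem_setOf_eq] at hx ⊢
    simp [map_add, map_sub, hx, ha, ha']
  · intro x hx
    simp only [coe_filter, mem_filter, mem_univ, true_and, Set.mem_setOf_eq] at hx ⊢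
    simp [map_add, map_sub, hx, ha, ha']
  · intro x _; show _ + _ + _ = _; rw [add_assoc, sub_add_sub_cancel, sub_self, add_zero]
  · intro x _; show _ + _ + _ = _; rw [add_assoc, sub_add_sub_cancel, sub_self, add_zero]

lemma card_fiber_mul (f : G →+ H) (hf : ∀ b, ∃ a, f a = b) (b : H) :
    (univ.filter fun x => f x = b).card * Fintype.card H = Fintype.card G := by
  have h1 : (univ : Finset G).card = ∑ c : H, (univ.filter fun x => f x = c).card :=
    Finset.card_eq_sum_card_fiberwise (fun x _ => mem_univ (f x))
  have h2 : ∀ c : H, (univ.filter fun x => f x = c).card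
      = (univ.filter fun x => f x = b).card :=
    fun c => fiber_card_eq f c b (hf c) (hf b)
  rw [Fintype.card, Fintype.card, h1,
    Finset.sum_congr rfl (fun c _ => h2 c), Finset.sum_const, smul_eq_mul, mul_comm]

omit [Fintype H] in
lemma exists_eq_one {G : Type*} [AddCommGroup G] (f : G →+ ZMod 2) (hf : f ≠ 0) :
    ∃ a, f a = 1 := by
  have : ∃ a, f a ≠ 0 := by
    by_contra h
    push_neg at h
    exact hf (AddMonoidHom.ext h)
  obtain ⟨a, ha⟩ := this
  rcases (by decide : ∀ x : ZMod 2, x = 0 ∨ x = 1) (f a) with h | h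
  · exact absurd h ha
  · exact ⟨a, h⟩

lemma pair_surj {G : Type*} [AddCommGroup G] (f g : G →+ ZMod 2)
    (hf : f ≠ 0) (hg : g ≠ 0) (hfg : f ≠ g) :
    ∀ z : ZMod 2 × ZMod 2, ∃ v, f v = z.1 ∧ g v = z.2 := by
  have hzm : ∀ x : ZMod 2, x = 0 ∨ x = 1 := by decide
  obtain ⟨a, ha⟩ := exists_eq_one f hf
  obtain ⟨b, hb⟩ := exists_eq_one g hg
  have key : (∃ v, f v = 1 ∧ g v = 0) ∧ (∃ v, f v = 0 ∧ g v = 1) ∧ (∃ v, f v = 1 ∧ g v = 1) := by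
    rcases hzm (g a) with h1 | h1
    · refine ⟨⟨a, ha, h1⟩, ?_⟩
      rcases hzm (f b) with h2 | h2
      · exact ⟨⟨b, h2, hb⟩, ⟨a + b, by simp [map_add, ha, hb, h1, h2]⟩⟩
      · exact ⟨⟨a + b, by simp [map_add, ha, hb, h1, h2, (by decide : (1:ZMod 2)+1 = 0)]⟩, ⟨b, h2, hb⟩⟩
    · have hd : ∃ d, f d ≠ g d := by
        by_contra h
        push_neg at h
        exact hfg (AddMonoidHom.ext h)
      obtain ⟨d, hd⟩ := hd
      rcases hzm (f d) with h2 | h2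
      · have h3 : g d = 1 := by
          rcases hzm (g d) with h3 | h3
          · exact absurd (h2.trans h3.symm) hd
          · exact h3
        exact ⟨⟨a + d, by simp [map_add, ha, h1, h2, h3, (by decide : (1:ZMod 2)+1 = 0)]⟩, ⟨d, h2, h3⟩,
          ⟨a, ha, h1⟩⟩
      · have h3 : g d = 0 := by
          rcases hzm (g d) with h3 | h3
          · exact h3
          · exact absurd (h2.trans h3.symm) hd
        exact ⟨⟨d, h2, h3⟩, ⟨a + d, by simp [map_add, ha, h1, h2, h3, (by decide : (1:ZMod 2)+1 = 0)]⟩,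
          ⟨a, ha, h1⟩⟩
  obtain ⟨h10, h01, h11⟩ := key
  intro z
  rcases hzm z.1 with hz1 | hz1 <;> rcases hzm z.2 with hz2 | hz2 <;>
    rw [hz1, hz2]
  · exact ⟨0, by simp⟩
  · exact h01
  · exact h10
  · exact h11

end counting

set_option maxHeartbeats 1000000 in
theorem stmt8 {n : ℕ} (V : Submodule (ZMod 2) (Fin n → ZMod 2))
    (hwt : ∀ v ∈ V, v ≠ 0 → wt v = 24 ∨ wt v = 32) :
    Module.finrank (ZMod 2) V ≤ 9 := by
  classical
  by_contra hcon
  push_neg at hcon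
  haveI : Fintype ↥V := Fintype.ofFinite ↥V
  set k := Module.finrank (ZMod 2) ↥V with hkdef
  have hk : 10 ≤ k := hcon
  have hcardV : Fintype.card ↥V = 2 ^ k := by
    simpa [ZMod.card] using Module.card_eq_pow_finrank (K := ZMod 2) (V := ↥V)
  have hzm : ∀ x : ZMod 2, x = 0 ∨ x = 1 := by decide
  set φ : Fin n → (↥V →+ ZMod 2) := fun i =>
    { toFun := fun v => v.1 i
      map_zero' := rfl
      map_add' := fun a b => rfl } with hφdef
  have hφ : ∀ i (v : ↥V), φ i v = v.1 i := fun _ _ => rfl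
  set A : Finset (Fin n) := univ.filter fun i => φ i ≠ 0 with hAdef
  set s := A.card with hsdef
  set E := 2 ^ (k - 10) with hEdef
  have hpow1 : 2 ^ (k - 1) = 512 * E := by
    rw [hEdef, show k - 1 = 9 + (k - 10) by omega, pow_add]; norm_num
  have hpow2 : 2 ^ (k - 2) = 256 * E := by
    rw [hEdef, show k - 2 = 8 + (k - 10) by omega, pow_add]; norm_num
  have hpow0 : 2 ^ k = 1024 * E := by
    rw [hEdef, show k = 10 + (k - 10) by omega, pow_add]; norm_num
  -- single-coordinate fiber counts
  have hsingle : ∀ i ∈ A, (univ.filter fun v : ↥V => φ i v = 1).card = 2 ^ (k - 1) := by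
    intro i hi
    have hne : φ i ≠ 0 := (mem_filter.mp hi).2
    have hsurj : ∀ b : ZMod 2, ∃ a : ↥V, φ i a = b := by
      intro b
      rcases hzm b with hb | hb
      · exact ⟨0, by rw [hb, map_zero]⟩
      · obtain ⟨a, ha⟩ := exists_eq_one (φ i) hne
        exact ⟨a, by rw [hb, ha]⟩
    have h := card_fiber_mul (φ i) hsurj 1
    rw [ZMod.card, hcardV] at h
    have h2 : 2 ^ k = 2 ^ (k - 1) * 2 := by
      rw [← pow_succ, Nat.sub_add_cancel (by omega)]
    omega
  -- pair fiber counts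
  have hpairne : ∀ i ∈ A, ∀ j ∈ A, φ i ≠ φ j →
      (univ.filter fun v : ↥V => φ i v = 1 ∧ φ j v = 1).card = 2 ^ (k - 2) := by
    intro i hi j hj hij
    have hfi : φ i ≠ 0 := (mem_filter.mp hi).2
    have hfj : φ j ≠ 0 := (mem_filter.mp hj).2
    have hsurj : ∀ z : ZMod 2 × ZMod 2, ∃ a : ↥V, ((φ i).prod (φ j)) a = z := by
      intro z
      obtain ⟨v, hv1, hv2⟩ := pair_surj (φ i) (φ j) hfi hfj hij z
      exact ⟨v, Prod.ext hv1 hv2⟩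
    have h := card_fiber_mul ((φ i).prod (φ j)) hsurj (1, 1)
    have hc4 : Fintype.card (ZMod 2 × ZMod 2) = 4 := by
      rw [Fintype.card_prod, ZMod.card]
    rw [hc4, hcardV] at h
    have h2 : 2 ^ k = 2 ^ (k - 2) * 4 := by
      rw [show k = (k-2) + 2 by omega, pow_add]; norm_num
    have h3 : (univ.filter fun v : ↥V => ((φ i).prod (φ j)) v = (1, 1))
        = univ.filter fun v : ↥V => φ i v = 1 ∧ φ j v = 1 := by
      apply Finset.filter_congr
      intro v _
      constructor
      · intro hv; exact ⟨congrArg Prod.fst hv, congrArg Prod.snd hv⟩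
      · intro hv; exact Prod.ext hv.1 hv.2
    rw [h3] at h
    omega
  have hpaireq : ∀ i ∈ A, ∀ j ∈ A, φ i = φ j →
      (univ.filter fun v : ↥V => φ i v = 1 ∧ φ j v = 1).card = 2 ^ (k - 1) := by
    intro i hi j hj hij
    have h3 : (univ.filter fun v : ↥V => φ i v = 1 ∧ φ j v = 1)
        = univ.filter fun v : ↥V => φ i v = 1 := by
      apply Finset.filter_congr
      intro v _
      rw [← hij]
      simp
    rw [h3]
    exact hsingle i hi
  have hne1 : ∀ x : ZMod 2, (¬ x = 0) ↔ x = 1 := by decide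
  have hwt_expand : ∀ v : ↥V, wt v.1 = ∑ i : Fin n, if v.1 i ≠ 0 then 1 else 0 := by
    intro v; rw [wt, Finset.card_filter]
  have hfilter_eq : ∀ i ∈ A, (univ.filter fun v : ↥V => v.1 i ≠ 0)
      = univ.filter fun v : ↥V => φ i v = 1 := by
    intro i _
    apply Finset.filter_congr
    intro v _
    rw [hφ]
    exact hne1 _
  have hfilter_zero : ∀ i : Fin n, i ∉ A →
      (univ.filter fun v : ↥V => v.1 i ≠ 0) = ∅ := by
    intro i hiA
    have h0 : φ i = 0 := by
      by_contra h
      exact hiA (mem_filter.mpr ⟨mem_univ i, h⟩)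
    apply Finset.filter_false_of_mem
    intro v _
    have : φ i v = 0 := by rw [h0]; rfl
    rw [hφ] at this
    simp [this]
  -- first moment
  have hS1 : ∑ v : ↥V, wt v.1 = s * 2 ^ (k - 1) := by
    calc ∑ v : ↥V, wt v.1
        = ∑ v : ↥V, ∑ i : Fin n, (if v.1 i ≠ 0 then 1 else 0) :=
          Finset.sum_congr rfl fun v _ => hwt_expand v
      _ = ∑ i : Fin n, ∑ v : ↥V, (if v.1 i ≠ 0 then 1 else 0) := Finset.sum_comm
      _ = ∑ i : Fin n, (univ.filter fun v : ↥V => v.1 i ≠ 0).card := by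
          exact Finset.sum_congr rfl fun i _ => (Finset.card_filter _ _).symm
      _ = ∑ i ∈ A, (univ.filter fun v : ↥V => v.1 i ≠ 0).card := by
          refine (Finset.sum_subset (Finset.subset_univ A) ?_).symm
          intro i _ hiA
          rw [hfilter_zero i hiA, Finset.card_empty]
      _ = ∑ i ∈ A, 2 ^ (k - 1) := by
          refine Finset.sum_congr rfl fun i hi => ?_
          rw [hfilter_eq i hi]
          exact hsingle i hi
      _ = s * 2 ^ (k - 1) := by rw [Finset.sum_const, smul_eq_mul]
  -- second moment
  set P := ((A ×ˢ A).filter fun p => φ p.1 = φ p.2).card with hPdef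
  set Q := ((A ×ˢ A).filter fun p => ¬ φ p.1 = φ p.2).card with hQdef
  have hPQ : P + Q = s * s := by
    rw [hPdef, hQdef, Finset.card_filter_add_card_filter_not,
      Finset.card_product]
  have hite : ∀ (p q : Prop) (_ : Decidable p) (_ : Decidable q),
      ((if p then (1:ℕ) else 0) * (if q then 1 else 0)) = if p ∧ q then 1 else 0 := by
    intro p q _ _
    by_cases hp : p <;> by_cases hq : q <;> simp [hp, hq]
  have hsq : ∀ v : ↥V, wt v.1 * wt v.1
      = ∑ p ∈ univ ×ˢ univ, (if v.1 p.1 ≠ 0 ∧ v.1 p.2 ≠ 0 then 1 else 0) := by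
    intro v
    rw [hwt_expand v, Finset.sum_mul_sum, ← Finset.sum_product']
    exact Finset.sum_congr rfl fun p _ => hite _ _ _ _
  have hS2 : ∑ v : ↥V, wt v.1 * wt v.1 = P * 2 ^ (k - 1) + Q * 2 ^ (k - 2) := by
    have step1 : ∑ v : ↥V, wt v.1 * wt v.1
        = ∑ p ∈ univ ×ˢ univ,
            (univ.filter fun v : ↥V => v.1 p.1 ≠ 0 ∧ v.1 p.2 ≠ 0).card := by
      calc ∑ v : ↥V, wt v.1 * wt v.1
          = ∑ v : ↥V, ∑ p ∈ univ ×ˢ univ,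
              (if v.1 p.1 ≠ 0 ∧ v.1 p.2 ≠ 0 then 1 else 0) :=
            Finset.sum_congr rfl fun v _ => hsq v
        _ = ∑ p ∈ univ ×ˢ univ, ∑ v : ↥V,
              (if v.1 p.1 ≠ 0 ∧ v.1 p.2 ≠ 0 then 1 else 0) := Finset.sum_comm
        _ = _ := Finset.sum_congr rfl fun p _ => (Finset.card_filter _ _).symm
    have step2 : ∑ p ∈ univ ×ˢ univ,
          (univ.filter fun v : ↥V => v.1 p.1 ≠ 0 ∧ v.1 p.2 ≠ 0).card
        = ∑ p ∈ A ×ˢ A,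
          (univ.filter fun v : ↥V => v.1 p.1 ≠ 0 ∧ v.1 p.2 ≠ 0).card := by
      refine (Finset.sum_subset (Finset.subset_univ _) ?_).symm
      intro p _ hpA
      rw [Finset.mem_product] at hpA
      push_neg at hpA
      have hempty : (univ.filter fun v : ↥V => v.1 p.1 ≠ 0 ∧ v.1 p.2 ≠ 0) = ∅ := by
        apply Finset.filter_false_of_mem
        intro v _
        by_cases h1 : p.1 ∈ A
        · have h2 := hpA h1
          have h0 : φ p.2 = 0 := by
            by_contra h
            exact h2 (mem_filter.mpr ⟨mem_univ _, h⟩)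
          have : φ p.2 v = 0 := by rw [h0]; rfl
          rw [hφ] at this
          simp [this]
        · have h0 : φ p.1 = 0 := by
            by_contra h
            exact h1 (mem_filter.mpr ⟨mem_univ _, h⟩)
          have : φ p.1 v = 0 := by rw [h0]; rfl
          rw [hφ] at this
          simp [this]
      rw [hempty, Finset.card_empty]
    have step3 : ∀ p ∈ A ×ˢ A,
        (univ.filter fun v : ↥V => v.1 p.1 ≠ 0 ∧ v.1 p.2 ≠ 0).card
        = (univ.filter fun v : ↥V => φ p.1 v = 1 ∧ φ p.2 v = 1).card := by
      intro p _
      congr 1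
      apply Finset.filter_congr
      intro v _
      exact and_congr (hne1 _) (hne1 _)
    have step4 : ∑ p ∈ A ×ˢ A,
          (univ.filter fun v : ↥V => φ p.1 v = 1 ∧ φ p.2 v = 1).card
        = P * 2 ^ (k - 1) + Q * 2 ^ (k - 2) := by
      rw [← Finset.sum_filter_add_sum_filter_not (A ×ˢ A) (fun p => φ p.1 = φ p.2)]
      congr 1
      · rw [Finset.sum_congr rfl (fun p hp => ?_), Finset.sum_const, smul_eq_mul]
        rw [Finset.mem_filter, Finset.mem_product] at hp
        exact hpaireq p.1 hp.1.1 p.2 hp.1.2 hp.2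
      · rw [Finset.sum_congr rfl (fun p hp => ?_), Finset.sum_const, smul_eq_mul]
        rw [Finset.mem_filter, Finset.mem_product] at hp
        exact hpairne p.1 hp.1.1 p.2 hp.1.2 hp.2
    rw [step1, step2, Finset.sum_congr rfl step3, step4]
  -- parity of P
  have hPpar : ∃ r, P = s + 2 * r := by
    set S := (A ×ˢ A).filter fun p => φ p.1 = φ p.2 with hSdef
    have hsplit : S.card = (S.filter fun p => p.1 = p.2).card
        + (S.filter fun p => ¬ p.1 = p.2).card :=
      (Finset.card_filter_add_card_filter_not _).symm
    have hdiag : (S.filter fun p => p.1 = p.2).card = s := by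
      apply Finset.card_nbij' (fun p => p.1) (fun i => (i, i))
      · intro p hp
        rw [Finset.mem_coe, Finset.mem_filter, hSdef, Finset.mem_filter, Finset.mem_product] at hp
        exact hp.1.1.1
      · intro i hi
        rw [Finset.mem_coe, Finset.mem_filter, hSdef, Finset.mem_filter, Finset.mem_product]
        exact ⟨⟨⟨hi, hi⟩, rfl⟩, rfl⟩
      · intro p hp
        rw [Finset.mem_coe, Finset.mem_filter] at hp
        exact Prod.ext rfl hp.2
      · intro i _
        rfl
    set T := S.filter fun p => ¬ p.1 = p.2 with hTdef
    have hT2 : T.card = (T.filter fun p => p.1 < p.2).card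
        + (T.filter fun p => ¬ p.1 < p.2).card :=
      (Finset.card_filter_add_card_filter_not _).symm
    have hTswap : ∀ p ∈ T, Prod.swap p ∈ T := by
      intro p hp
      rw [hTdef, Finset.mem_filter, hSdef, Finset.mem_filter, Finset.mem_product] at hp ⊢
      exact ⟨⟨⟨hp.1.1.2, hp.1.1.1⟩, hp.1.2.symm⟩, fun h => hp.2 h.symm⟩
    have hbij : (T.filter fun p => p.1 < p.2).card
        = (T.filter fun p => ¬ p.1 < p.2).card := by
      apply Finset.card_nbij' Prod.swap Prod.swap
      · intro p hp
        rw [Finset.mem_coe, Finset.mem_filter] at hp ⊢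
        exact ⟨hTswap p hp.1, by simp [asymm hp.2]⟩
      · intro p hp
        rw [Finset.mem_coe, Finset.mem_filter] at hp ⊢
        refine ⟨hTswap p hp.1, ?_⟩
        have hne : ¬ p.1 = p.2 := (Finset.mem_filter.mp hp.1).2
        have : p.2 < p.1 := lt_of_le_of_ne (le_of_not_gt hp.2) (fun h => hne h.symm)
        simpa using this
      · intro p _; exact Prod.swap_swap p
      · intro p _; exact Prod.swap_swap p
    exact ⟨(T.filter fun p => p.1 < p.2).card, by omega⟩
  -- the weight identity
  have hmain : ∑ v : ↥V, wt v.1 * wt v.1 + 768 * 2 ^ k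
      = 768 + 56 * ∑ v : ↥V, wt v.1 := by
    have hptwise : ∀ v : ↥V, wt v.1 * wt v.1 + 768
        = 56 * wt v.1 + (if v = 0 then 768 else 0) := by
      intro v
      by_cases hv : v = 0
      · subst hv
        simp [wt]
      · have hv' : (v : Fin n → ZMod 2) ≠ 0 := by
          simpa [Submodule.coe_eq_zero] using hv
        rcases hwt v.1 v.2 hv' with h | h <;> rw [h] <;> simp [hv]
    have hsum : ∑ v : ↥V, (wt v.1 * wt v.1 + 768)
        = ∑ v : ↥V, (56 * wt v.1 + if v = 0 then 768 else 0) :=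
      Finset.sum_congr rfl (fun v _ => hptwise v)
    rw [Finset.sum_add_distrib, Finset.sum_add_distrib, Finset.sum_const,
      Finset.sum_ite_eq' univ (0 : ↥V) (fun _ => 768), ← Finset.mul_sum] at hsum
    simp only [mem_univ, if_true, smul_eq_mul] at hsum
    have hcu : (univ : Finset ↥V).card = 2 ^ k := hcardV
    rw [hcu] at hsum
    omega
  -- final contradiction
  obtain ⟨r, hr⟩ := hPpar
  rw [hS1, hS2, hpow0, hpow1, hpow2] at hmain
  -- hmain : P * (512*E) + Q * (256*E) + 768*(1024*E) = 768 + 56*(s*(512*E))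
  have heq : E * (2 * P + Q + 3072) = 3 + 112 * s * E := by
    apply Nat.eq_of_mul_eq_mul_left (show 0 < 256 by norm_num)
    calc 256 * (E * (2 * P + Q + 3072))
        = P * (512 * E) + Q * (256 * E) + 768 * (1024 * E) := by ring
      _ = 768 + 56 * (s * (512 * E)) := hmain
      _ = 256 * (3 + 112 * s * E) := by ring
  rcases Nat.lt_or_ge k 11 with hk11 | hk11
  · -- k = 10, E = 1
    have hE1 : E = 1 := by
      rw [hEdef, show k - 10 = 0 by omega, pow_zero]
    rw [hE1] at heq
    obtain ⟨m, hm⟩ := Nat.even_mul_succ_self s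
    have hus : s * s + s = 2 * m := by
      have : s * (s + 1) = s * s + s := by ring
      omega
    omega
  · -- k ≥ 11, E even
    have hE2 : ∃ E', E = 2 * E' := ⟨2 ^ (k - 11), by
      rw [hEdef, show k - 10 = 1 + (k - 11) by omega, pow_add, pow_one]⟩
    obtain ⟨E', hE'⟩ := hE2
    rw [hE'] at heq
    have h1 : 2 * (E' * (2 * P + Q + 3072)) = 3 + 2 * (112 * s * E') := by
      calc 2 * (E' * (2 * P + Q + 3072)) = 2 * E' * (2 * P + Q + 3072) := by ring
        _ = 3 + 112 * s * (2 * E') := heq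
        _ = 3 + 2 * (112 * s * E') := by ring
    omega
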